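/- If σ_s'(1) ≥ 0 and F_l solves F_l'' + (2/r)F_l' − ((l²+l)/r²)F_l = f'(σ_s)F_l on (0,1) with F_l bounded near 0 and F_l(1) = −σ_s'(1) ≤ 0, and f'(σ_s(r)) > 0 for all r, then F_l(r) ≤ 0 for all r ∈ (0,1]. -/

import Mathlib

open Set

/-- Maximum principle for the radial linearized equation: if `σ_s'(1) ≥ 0`,
`F` solves `F'' + (2/r) F' - ((l²+l)/r²) F = f'(σ_s) F` on `(0,1)`, is bounded near `0`
(encoded as continuity on `[0,1]`), `F(1) = -σ_s'(1) ≤ 0`, and `f'(σ_s(r)) > 0` for all `r`,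
then `F ≤ 0` on `(0,1]`. -/
theorem stmt_4 (f σs F : ℝ → ℝ) (l : ℕ)
    (hσ'1 : 0 ≤ deriv σs 1)
    (hF2 : ContDiffOn ℝ 2 F (Set.Ioc 0 1))
    (hFc : ContinuousOn F (Set.Icc 0 1))
    (hODE : ∀ r ∈ Set.Ioo (0:ℝ) 1,
      deriv (deriv F) r + (2 / r) * deriv F r - (((l:ℝ)^2 + l) / r^2) * F r
        = deriv f (σs r) * F r)
    (hF1 : F 1 = -deriv σs 1)
    (hc : ∀ r ∈ Set.Icc (0:ℝ) 1, 0 < deriv f (σs r)) :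
    ∀ r ∈ Set.Ioc (0:ℝ) 1, F r ≤ 0 := by
  -- differentiability facts on the open interval
  have hF2' : ContDiffOn ℝ 2 F (Ioo (0:ℝ) 1) := hF2.mono Ioo_subset_Ioc_self
  have hD1 : ContDiffOn ℝ 1 (deriv F) (Ioo (0:ℝ) 1) :=
    hF2'.deriv_of_isOpen isOpen_Ioo (by norm_num)
  have hF'cont : ContinuousOn (deriv F) (Ioo (0:ℝ) 1) := hD1.continuousOn
  have hFdiffOn : DifferentiableOn ℝ F (Ioc (0:ℝ) 1) := hF2.differentiableOn (by norm_num)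
  have hF''at : ∀ x ∈ Ioo (0:ℝ) 1, HasDerivAt (deriv F) (deriv (deriv F) x) x := by
    intro x hx
    exact ((hD1.differentiableOn (by norm_num) x hx).differentiableAt
      (isOpen_Ioo.mem_nhds hx)).hasDerivAt
  set g : ℝ → ℝ := fun x => x ^ 2 * deriv F x with hgdef
  have hg : ∀ x ∈ Ioo (0:ℝ) 1,
      HasDerivAt g (x ^ 2 * ((deriv f (σs x) + ((l:ℝ)^2 + l) / x^2) * F x)) x := by
    intro x hx
    have hx0 : x ≠ 0 := ne_of_gt hx.1
    have h := (hasDerivAt_pow 2 x).mul (hF''at x hx)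
    convert h using 1
    case e'_4 => rfl
    case e'_5 => rfl
    case e'_8 => rfl
    have hode := hODE x hx
    have hdd : deriv (deriv F) x
        = deriv f (σs x) * F x + (((l:ℝ)^2 + l) / x^2) * F x - (2 / x) * deriv F x := by
      linarith
    rw [hdd]
    field_simp
    ring
  have hgcont : ContinuousOn g (Ioo (0:ℝ) 1) :=
    (continuous_pow 2).continuousOn.mul hF'cont
  have hF1le : F 1 ≤ 0 := by rw [hF1]; linarith
  -- key monotonicity lemma for g on intervals where F > 0
  have key : ∀ p s : ℝ, 0 < p → p < s → s < 1 → (∀ x ∈ Ioo p s, 0 < F x) → g p < g s := by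
    intro p s hp hps hs1 hFpos
    have hsub : Icc p s ⊆ Ioo (0:ℝ) 1 := fun x hx =>
      ⟨lt_of_lt_of_le hp hx.1, lt_of_le_of_lt hx.2 hs1⟩
    have : StrictMonoOn g (Icc p s) := by
      apply strictMonoOn_of_deriv_pos (convex_Icc p s) (hgcont.mono hsub)
      intro x hx
      rw [interior_Icc] at hx
      have hx' : x ∈ Ioo (0:ℝ) 1 := ⟨lt_trans hp hx.1, lt_trans hx.2 hs1⟩
      rw [(hg x hx').deriv]
      have h1 : 0 < deriv f (σs x) + ((l:ℝ)^2 + l) / x^2 := by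
        have := hc x ⟨le_of_lt hx'.1, le_of_lt hx'.2⟩
        have h2 : (0:ℝ) ≤ ((l:ℝ)^2 + l) / x^2 := by positivity
        linarith
      exact mul_pos (pow_pos hx'.1 2) (mul_pos h1 (hFpos x hx))
    exact this (left_mem_Icc.mpr (le_of_lt hps)) (right_mem_Icc.mpr (le_of_lt hps)) hps
  -- main argument, by contradiction
  intro b hb
  by_contra hpos
  push_neg at hpos
  obtain ⟨hb0, hb1'⟩ := hb
  have hb1 : b < 1 := lt_of_le_of_ne hb1' (by rintro rfl; linarith)
  -- the first zero (or nonpositive point) to the right of b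
  set T : Set ℝ := {x | x ∈ Icc b 1 ∧ F x ≤ 0} with hT
  have hTne : T.Nonempty := ⟨1, ⟨le_of_lt hb1, le_refl 1⟩, hF1le⟩
  have hTclosed : IsClosed T := by
    have : T = Icc b 1 ∩ F ⁻¹' (Iic 0) := by ext x; simp [hT, and_comm]
    rw [this]
    exact (hFc.mono (Icc_subset_Icc (le_of_lt hb0) le_rfl)).preimage_isClosed_of_isClosed
      isClosed_Icc isClosed_Iic
  have hTbdd : BddBelow T := ⟨b, fun x hx => hx.1.1⟩
  set c := sInf T with hcdef
  have hcT : c ∈ T := hTclosed.csInf_mem hTne hTbdd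
  have hc1 : c ≤ 1 := hcT.1.2
  have hbc : b < c := by
    rcases lt_or_eq_of_le hcT.1.1 with h | h
    · exact h
    · exact absurd hcT.2 (by rw [← h]; linarith)
  have hFbc : ∀ x ∈ Ico b c, 0 < F x := by
    intro x hx
    by_contra hneg
    push_neg at hneg
    have : x ∈ T := ⟨⟨hx.1, le_trans (le_of_lt hx.2) hc1⟩, hneg⟩
    exact absurd (csInf_le hTbdd this) (not_le.mpr hx.2)
  -- MVT on [b, c] gives s with g s < 0
  obtain ⟨s, hsmem, hs⟩ := exists_deriv_eq_slope F hbc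
    (hFc.mono (Icc_subset_Icc (le_of_lt hb0) hc1))
    (hFdiffOn.mono (fun x hx => ⟨lt_trans hb0 hx.1, le_trans (le_of_lt hx.2) hc1⟩))
  have hs1 : s < 1 := lt_of_lt_of_le hsmem.2 hc1
  have hs0 : 0 < s := lt_trans hb0 hsmem.1
  have hgs : g s < 0 := by
    have hslope : deriv F s < 0 := by
      rw [hs]
      apply div_neg_of_neg_of_pos
      · linarith [hcT.2]
      · linarith [hsmem.2, hsmem.1]
    exact mul_neg_of_pos_of_neg (pow_pos hs0 2) hslope
  by_cases hA : ∃ x, x ∈ Ioc (0:ℝ) b ∧ F x ≤ 0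
  · -- Case 1: F vanishes somewhere in (0, b]
    obtain ⟨r₁, hr₁, hFr₁⟩ := hA
    set A : Set ℝ := {x | x ∈ Icc r₁ b ∧ F x ≤ 0} with hAdef
    have hAne : A.Nonempty := ⟨r₁, ⟨le_rfl, hr₁.2⟩, hFr₁⟩
    have hAclosed : IsClosed A := by
      have : A = Icc r₁ b ∩ F ⁻¹' (Iic 0) := by ext x; simp [hAdef, and_comm]
      rw [this]
      exact (hFc.mono (Icc_subset_Icc (le_of_lt hr₁.1) hb1')).preimage_isClosed_of_isClosed
        isClosed_Icc isClosed_Iic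
    have hAbdd : BddAbove A := ⟨b, fun x hx => hx.1.2⟩
    set a := sSup A with hadef
    have haA : a ∈ A := hAclosed.csSup_mem hAne hAbdd
    have ha0 : 0 < a := lt_of_lt_of_le hr₁.1 haA.1.1
    have hab : a < b := by
      rcases lt_or_eq_of_le haA.1.2 with h | h
      · exact h
      · exact absurd haA.2 (by rw [h]; linarith)
    have hFab : ∀ x ∈ Ioc a b, 0 < F x := by
      intro x hx
      by_contra hneg
      push_neg at hneg
      have : x ∈ A := ⟨⟨le_trans haA.1.1 (le_of_lt hx.1), hx.2⟩, hneg⟩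
      exact absurd (le_csSup hAbdd this) (not_le.mpr hx.1)
    -- MVT on [a, b] gives p with g p > 0
    obtain ⟨p, hpmem, hp⟩ := exists_deriv_eq_slope F hab
      (hFc.mono (Icc_subset_Icc (le_of_lt ha0) hb1'))
      (hFdiffOn.mono (fun x hx => ⟨lt_trans ha0 hx.1, le_trans (le_of_lt hx.2) hb1'⟩))
    have hp0 : 0 < p := lt_trans ha0 hpmem.1
    have hgp : 0 < g p := by
      have hslope : 0 < deriv F p := by
        rw [hp]
        apply div_pos
        · linarith [haA.2]
        · linarith [hpmem.2, hpmem.1]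
      exact mul_pos (pow_pos hp0 2) hslope
    have hps : p < s := lt_trans hpmem.2 hsmem.1
    have := key p s hp0 hps hs1 (fun x hx => by
      rcases le_or_gt x b with h | h
      · exact hFab x ⟨lt_trans hpmem.1 hx.1, h⟩
      · exact hFbc x ⟨le_of_lt h, lt_trans hx.2 hsmem.2⟩)
    linarith
  · -- Case 2: F > 0 on all of (0, b], so F > 0 on (0, c), so g < g s on (0, s)
    push_neg at hA
    have hFpos : ∀ x ∈ Ioo (0:ℝ) c, 0 < F x := by
      intro x hx
      rcases le_or_gt x b with h | h
      · exact hA x ⟨hx.1, h⟩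
      · exact hFbc x ⟨le_of_lt h, hx.2⟩
    have hglt : ∀ x ∈ Ioo (0:ℝ) s, g x < g s := by
      intro x hx
      exact key x s hx.1 hx.2 hs1 (fun y hy =>
        hFpos y ⟨lt_trans hx.1 hy.1, lt_trans hy.2 hsmem.2⟩)
    -- F bounded above on [0,1]
    obtain ⟨K, hK⟩ := (isCompact_Icc.image_of_continuousOn hFc).bddAbove
    have hKb : ∀ x ∈ Icc (0:ℝ) 1, F x ≤ K := fun x hx => hK (mem_image_of_mem F hx)
    set m := -g s with hmdef
    have hm : 0 < m := by simp [hmdef]; linarith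
    set C := F s + g s * s⁻¹ with hCdef
    have hCK : C ≤ K := by
      have h1 : F s ≤ K := hKb s ⟨le_of_lt hs0, le_of_lt hs1⟩
      have h2 : g s * s⁻¹ < 0 := mul_neg_of_neg_of_pos hgs (inv_pos.mpr hs0)
      simp [hCdef]; linarith
    set ε := min (s / 2) (m / (K - C + 1)) with hεdef
    have hε0 : 0 < ε := lt_min (by linarith) (div_pos hm (by linarith))
    have hεs : ε < s := lt_of_le_of_lt (min_le_left _ _) (by linarith)
    -- h := F + g s / x is antitone on [ε, s]
    have hanti : AntitoneOn (fun x => F x + g s * x⁻¹) (Icc ε s) := by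
      apply antitoneOn_of_deriv_nonpos (convex_Icc ε s)
      · apply ContinuousOn.add
        · exact hFc.mono (fun x hx => ⟨le_trans (le_of_lt hε0) hx.1, le_trans hx.2 (le_of_lt hs1)⟩)
        · exact continuousOn_const.mul (continuousOn_inv₀.mono (fun x hx => ne_of_gt (lt_of_lt_of_le hε0 hx.1)))
      · rw [interior_Icc]
        intro x hx
        have hx0 : x ≠ 0 := ne_of_gt (lt_trans hε0 hx.1)
        have hxI : x ∈ Ioo (0:ℝ) 1 := ⟨lt_trans hε0 hx.1, lt_trans hx.2 hs1⟩
        exact ((hFdiffOn.differentiableAt (Ioc_mem_nhds hxI.1 hxI.2)).add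
          (((hasDerivAt_inv hx0).const_mul (g s)).differentiableAt)).differentiableWithinAt
      · rw [interior_Icc]
        intro x hx
        have hx0 : 0 < x := lt_trans hε0 hx.1
        have hxI : x ∈ Ioo (0:ℝ) 1 := ⟨hx0, lt_trans hx.2 hs1⟩
        have hFd : HasDerivAt F (deriv F x) x :=
          (hFdiffOn.differentiableAt (Ioc_mem_nhds hxI.1 hxI.2)).hasDerivAt
        have hder : HasDerivAt (fun x => F x + g s * x⁻¹)
            (deriv F x + g s * (-(x^2)⁻¹)) x :=
          hFd.add ((hasDerivAt_inv (ne_of_gt hx0)).const_mul (g s))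
        rw [hder.deriv]
        have hgx : g x < g s := hglt x ⟨hx0, hx.2⟩
        have hgx' : x ^ 2 * deriv F x < g s := hgx
        have hx2 : (0:ℝ) < x ^ 2 := pow_pos hx0 2
        have h2 : deriv F x ≤ g s * (x^2)⁻¹ := by
          rw [← div_eq_mul_inv, le_div_iff₀ hx2]
          nlinarith
        linarith [h2]
    have hkey := hanti (left_mem_Icc.mpr (le_of_lt hεs)) (right_mem_Icc.mpr (le_of_lt hεs)) (le_of_lt hεs)
    -- hkey : F s + g s * s⁻¹ ≤ F ε + g s * ε⁻¹
    have hεle : ε ≤ m / (K - C + 1) := min_le_right _ _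
    have hDm : K - C + 1 ≤ m / ε := by
      rw [le_div_iff₀ hε0]
      calc (K - C + 1) * ε ≤ (K - C + 1) * (m / (K - C + 1)) := by
            apply mul_le_mul_of_nonneg_left hεle; linarith
        _ = m := by
            have hne : K - C + 1 ≠ 0 := by linarith
            rw [mul_comm, div_mul_cancel₀ _ hne]
    have hFε : F ε ≥ C + m / ε := by
      have : C ≤ F ε + g s * ε⁻¹ := hkey
      have hrw : g s * ε⁻¹ = -(m / ε) := by
        rw [hmdef]; field_simp
      rw [hrw] at this
      linarith
    have hεK : F ε ≤ K := hKb ε ⟨le_of_lt hε0, le_of_lt (lt_trans hεs hs1)⟩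
    linarith
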